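/- Let (K, d) be a compact metric space and Φ ⊆ C(K) a Banach space separating points of K with α‖·‖_Φ ≥ ‖·‖_∞ for some α > 0. For x ∈ K, let Ω_x = {f ∈ ΦC(K) : f(x) = max_K f}, where ΦC(K) is the space of Φ-convex upper semicontinuous functions on K. Then Ω_x is a nonempty closed cone in (ΦC(K), ρ_∞), and there exists a Φ-extremal point e of K with Ω_x ⊆ Ω_e. -/
import Mathlib

/-- a is F-between y and z for a family F of real functions. -/
def PhiBetween {K : Type*} (F : Set (K → ℝ)) (a y z : K) : Prop :=
  ∀ φ ∈ F, φ y ≤ φ a → φ z ≤ φ a → φ a = φ y ∧ φ a = φ z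

/-- e is an F-extremal point of the set A. -/
def PhiExtremalIn {K : Type*} (F : Set (K → ℝ)) (A : Set K) (e : K) : Prop :=
  e ∈ A ∧ ∀ y ∈ A, ∀ z ∈ A, PhiBetween F e y z → y = e ∧ z = e

/-- f is F-convex. -/
def PhiConvex {K : Type*} (F : Set (K → ℝ)) (f : K → ℝ) : Prop :=
  ∀ a x y : K, PhiBetween F a x y → f x ≤ f a → f y ≤ f a →
    f x = f a ∧ f y = f a

/-- the metric of uniform convergence. -/
noncomputable def rho {K : Type*} (f g : K → ℝ) : ℝ :=
  ⨆ x : K, |f x - g x| / (1 + |f x - g x|)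

/-- U is open in B for the metric rho. -/
def RhoOpenIn {K : Type*} (B U : Set (K → ℝ)) : Prop :=
  U ⊆ B ∧ ∀ f ∈ U, ∃ ε > 0, ∀ g ∈ B, rho f g < ε → g ∈ U

lemma rho_pt {K : Type*} [Nonempty K] (f g : K → ℝ) (z : K) :
    |f z - g z| / (1 + |f z - g z|) ≤ rho f g := by
  apply le_ciSup (f := fun x => |f x - g x| / (1 + |f x - g x|))
  refine ⟨1, ?_⟩
  rintro _ ⟨w, rfl⟩
  have h0 : (0:ℝ) ≤ |f w - g w| := abs_nonneg _
  rw [div_le_one (by linarith)]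
  linarith

lemma rho_lt_imp {K : Type*} [Nonempty K] {f g : K → ℝ} {s : ℝ} (hs : 0 < s)
    (h : rho f g < s / (1 + s)) (z : K) : |f z - g z| < s := by
  have h1 := (rho_pt f g z).trans_lt h
  set t := |f z - g z| with ht
  have h0 : (0:ℝ) ≤ t := abs_nonneg _
  rw [div_lt_div_iff₀ (by linarith) (by linarith)] at h1
  nlinarith

theorem stmt11 {K : Type*} [MetricSpace K] [CompactSpace K] [Nonempty K]
    {Φ : Type*} [NormedAddCommGroup Φ] [NormedSpace ℝ Φ] [CompleteSpace Φ]
    (ι : Φ →ₗ[ℝ] C(K, ℝ)) (hinj : Function.Injective ι)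
    (α : ℝ) (hα : 0 < α) (hnorm : ∀ φ : Φ, ‖ι φ‖ ≤ α * ‖φ‖)
    (hsep : ∀ x y : K, x ≠ y → ∃ φ : Φ, ι φ x ≠ ι φ y)
    (F : Set (K → ℝ)) (hFdef : F = {g | ∃ φ : Φ, g = ⇑(ι φ)})
    (PhiC : Set (K → ℝ))
    (hPhiC : PhiC = {f | UpperSemicontinuous f ∧ PhiConvex F f})
    (Ω : K → Set (K → ℝ))
    (hΩ : ∀ z : K, Ω z = {f ∈ PhiC | ∀ y : K, f y ≤ f z})
    (x : K) :
    (Ω x).Nonempty ∧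
    (∀ f ∈ PhiC, (∀ ε > (0:ℝ), ∃ g ∈ Ω x, rho f g < ε) → f ∈ Ω x) ∧
    (∀ f ∈ Ω x, ∀ t : ℝ, 0 ≤ t → (fun y => t * f y) ∈ Ω x) ∧
    ∃ e : K, PhiExtremalIn F Set.univ e ∧ Ω x ⊆ Ω e := by
  have hmemΩ : ∀ z : K, ∀ f : K → ℝ, f ∈ Ω z ↔ (f ∈ PhiC ∧ ∀ y : K, f y ≤ f z) := by
    intro z f; rw [hΩ z]; exact Iff.rfl
  have hmemC : ∀ f : K → ℝ, f ∈ PhiC ↔ (UpperSemicontinuous f ∧ PhiConvex F f) := by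
    intro f; rw [hPhiC]; exact Iff.rfl
  refine ⟨?_, ?_, ?_, ?_⟩
  · -- nonempty: the zero function
    refine ⟨fun _ => 0, (hmemΩ x _).2 ⟨(hmemC _).2 ⟨upperSemicontinuous_const, ?_⟩,
      fun _ => le_refl 0⟩⟩
    intro a y z _ _ _; exact ⟨rfl, rfl⟩
  · -- closedness
    intro f hfC hap
    refine (hmemΩ x f).2 ⟨hfC, ?_⟩
    intro y
    by_contra hy
    push_neg at hy
    set δ := f y - f x with hδ
    have hδ0 : 0 < δ / 2 := by simp only [hδ]; linarith
    have hε : (0:ℝ) < (δ/2) / (1 + δ/2) := div_pos hδ0 (by linarith)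
    obtain ⟨g, hg, hrho⟩ := hap _ hε
    have hgy := rho_lt_imp hδ0 hrho y
    have hgx := rho_lt_imp hδ0 hrho x
    have hgle : g y ≤ g x := ((hmemΩ x g).1 hg).2 y
    rw [abs_lt] at hgy hgx
    linarith
  · -- cone
    intro f hf t ht
    obtain ⟨hfC, hfmax⟩ := (hmemΩ x f).1 hf
    obtain ⟨husc, hconv⟩ := (hmemC f).1 hfC
    refine (hmemΩ x _).2 ⟨(hmemC _).2 ⟨?_, ?_⟩, fun y => mul_le_mul_of_nonneg_left (hfmax y) ht⟩
    · -- USC of t * f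
      rcases eq_or_lt_of_le ht with rfl | htpos
      · simpa using (upperSemicontinuous_const : UpperSemicontinuous (fun _ : K => (0:ℝ)))
      · intro z y hy
        have : f z < y / t := (lt_div_iff₀' htpos).2 hy
        filter_upwards [husc z _ this] with w hw
        exact (lt_div_iff₀' htpos).1 hw
    · -- PhiConvex of t * f
      intro a u v hb hu hv
      rcases eq_or_lt_of_le ht with rfl | htpos
      · simp
      · have hu' : f u ≤ f a := le_of_mul_le_mul_left hu htpos
        have hv' : f v ≤ f a := le_of_mul_le_mul_left hv htpos
        obtain ⟨h1, h2⟩ := hconv a u v hb hu' hv'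
        exact ⟨by simp only []; rw [h1], by simp only []; rw [h2]⟩
  · -- extremal point
    set A : Set K := {z : K | ∀ f ∈ Ω x, ∀ y : K, f y ≤ f z} with hA
    have hxA : x ∈ A := fun f hf y => ((hmemΩ x f).1 hf).2 y
    have hAclosed : IsClosed A := by
      have : A = ⋂ f ∈ Ω x, ⋂ y : K, {z : K | f y ≤ f z} := by
        ext z; simp [hA, Set.mem_iInter]
      rw [this]
      refine isClosed_biInter fun f hf => isClosed_iInter fun y => ?_
      have husc : UpperSemicontinuous f := ((hmemC f).1 ((hmemΩ x f).1 hf).1).1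
      have : {z : K | f y ≤ f z} = (f ⁻¹' Set.Iio (f y))ᶜ := by
        ext z; simp [not_lt]
      rw [this]
      exact (upperSemicontinuous_iff_isOpen_preimage.1 husc (f y)).isClosed_compl
    -- the family for Zorn
    set P : Set K → Prop := fun S => ∀ e ∈ S, ∀ y z : K, PhiBetween F e y z → y ∈ S ∧ z ∈ S
      with hP
    have hAP : P A := by
      intro e he y z hb
      have key : ∀ f ∈ Ω x, f y = f e ∧ f z = f e := by
        intro f hf
        have hconv : PhiConvex F f := ((hmemC f).1 ((hmemΩ x f).1 hf).1).2
        exact hconv e y z hb (he f hf y) (he f hf z)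
      constructor
      · intro f hf w; rw [(key f hf).1]; exact he f hf w
      · intro f hf w; rw [(key f hf).2]; exact he f hf w
    set S : Set (Set K) := {s | s.Nonempty ∧ IsClosed s ∧ s ⊆ A ∧ P s} with hS
    have hAS : A ∈ S := ⟨⟨x, hxA⟩, hAclosed, le_refl A, hAP⟩
    obtain ⟨m, hmA, hmS, hmmin⟩ : ∃ m, m ⊆ A ∧ Minimal (· ∈ S) m := by
      refine zorn_superset_nonempty S ?_ A hAS
      intro c hcS hchain hcne
      refine ⟨⋂₀ c, ⟨?_, ?_, ?_, ?_⟩, fun s hs => Set.sInter_subset_of_mem hs⟩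
      · have : Nonempty c := hcne.to_subtype
        have hdir : DirectedOn (· ⊇ ·) c := by
          intro a hac b hbc
          rcases hchain.total hac hbc with h | h
          · exact ⟨a, hac, le_refl a, h⟩
          · exact ⟨b, hbc, h, le_refl b⟩
        refine IsCompact.nonempty_sInter_of_directed_nonempty_isCompact_isClosed
          hdir (fun U hU => (hcS hU).1)
          (fun U hU => (hcS hU).2.1.isCompact) (fun U hU => (hcS hU).2.1)
      · exact isClosed_sInter fun U hU => (hcS hU).2.1
      · obtain ⟨s0, hs0⟩ := hcne
        exact (Set.sInter_subset_of_mem hs0).trans (hcS hs0).2.2.1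
      · intro e he y z hb
        constructor
        · exact Set.mem_sInter.2 fun U hU => ((hcS hU).2.2.2 e (he U hU) y z hb).1
        · exact Set.mem_sInter.2 fun U hU => ((hcS hU).2.2.2 e (he U hU) y z hb).2
    obtain ⟨hmne, hmcl, hmA', hmP⟩ := hmS
    -- m is a singleton
    have hsingle : ∀ a ∈ m, ∀ b ∈ m, a = b := by
      by_contra hc
      push_neg at hc
      obtain ⟨a, ha, b, hb, hab⟩ := hc
      obtain ⟨φ, hφ⟩ := hsep a b hab
      obtain ⟨e0, he0, he0max⟩ := hmcl.isCompact.exists_isMaxOn hmne (ι φ).continuous.continuousOn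
      set S1 : Set K := {z ∈ m | ∀ w ∈ m, ι φ w ≤ ι φ z} with hS1
      have hS1S : S1 ∈ S := by
        refine ⟨⟨e0, he0, fun w hw => he0max hw⟩, ?_, ?_, ?_⟩
        · have : S1 = m ∩ ⋂ w : K, {z : K | w ∈ m → ι φ w ≤ ι φ z} := by
            ext z; simp [hS1, Set.mem_iInter]
          rw [this]
          refine hmcl.inter (isClosed_iInter fun w => ?_)
          by_cases hw : w ∈ m
          · simp only [hw, forall_true_left]
            exact isClosed_le continuous_const (ι φ).continuous
          · simp only [hw]
            simp
        · exact fun z hz => hmA' hz.1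
        · intro e he y z hb
          obtain ⟨hym, hzm⟩ := hmP e he.1 y z hb
          have hφF : ⇑(ι φ) ∈ F := by rw [hFdef]; exact ⟨φ, rfl⟩
          obtain ⟨h1, h2⟩ := hb _ hφF (he.2 y hym) (he.2 z hzm)
          refine ⟨⟨hym, fun w hw => ?_⟩, ⟨hzm, fun w hw => ?_⟩⟩
          · rw [← h1]; exact he.2 w hw
          · rw [← h2]; exact he.2 w hw
      have hS1m : S1 ⊆ m := fun z hz => hz.1
      have : S1 = m := hS1m.antisymm (hmmin hS1S hS1m)
      -- but one of a, b is not in S1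
      rcases lt_trichotomy (ι φ a) (ι φ b) with hlt | heq | hgt
      · have : a ∈ S1 := this ▸ ha
        exact absurd (this.2 b hb) (not_le.2 hlt)
      · exact hφ heq
      · have : b ∈ S1 := this ▸ hb
        exact absurd (this.2 a ha) (not_le.2 hgt)
    obtain ⟨e, he⟩ := hmne
    refine ⟨e, ⟨Set.mem_univ e, ?_⟩, ?_⟩
    · intro y _ z _ hb
      obtain ⟨hym, hzm⟩ := hmP e he y z hb
      exact ⟨hsingle y hym e he, hsingle z hzm e he⟩
    · intro f hf
      obtain ⟨hfC, _⟩ := (hmemΩ x f).1 hf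
      exact (hmemΩ e f).2 ⟨hfC, fun y => hmA he f hf y⟩
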